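/- Fix \(D > 0\) and \(\Lambda_0 \in SO_3(\mathbb{R})\), and let \(\mu\) be the Haar probability measure on \(SO_3(\mathbb{R})\). For \(f \in L^2(\mu)\), define the jump collision operator \(\Gamma_{\Lambda_0}(f) = \big(\int f\,\mathrm{d}\mu\big) M_{\Lambda_0} - f\). Then a function \(\psi \in L^2(\mu)\) satisfies \(\int \Gamma_{\Lambda_0}(f)\,\psi\,\mathrm{d}\mu = 0\) for every \(f \in L^2(\mu)\) such that \(\int f(A)\,\big(\tfrac{1}{2}\mathrm{Tr}(P^\mathsf{T}\Lambda_0^\mathsf{T} A)\big)\,\mathrm{d}\mu(A) = 0\) for all antisymmetric \(P\), if and only if there exists an antisymmetric matrix \(P\) such that, for \(\mu\)-almost every \(A\), \(\big(\int \psi\,M_{\Lambda_0}\,\mathrm{d}\mu\big) - \psi(A) = \tfrac{1}{2}\mathrm{Tr}(P^\mathsf{T}\Lambda_0^\mathsf{T} A)\). -/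

import Mathlib

open scoped Matrix
open MeasureTheory

noncomputable section

/-- The space of real 3×3 matrices. -/
abbrev Mat3 := Matrix (Fin 3) (Fin 3) ℝ

/-- The special orthogonal group `SO₃(ℝ)`. -/
def SO3T : Type := {A : Mat3 // Aᵀ * A = 1 ∧ A.det = 1}

namespace SO3T

instance : Group SO3T where
  mul A B := ⟨A.1 * B.1, by
    obtain ⟨hA1, hA2⟩ := A.2
    obtain ⟨hB1, hB2⟩ := B.2
    constructor
    · rw [Matrix.transpose_mul, Matrix.mul_assoc, ← Matrix.mul_assoc (A.1)ᵀ, hA1,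
        Matrix.one_mul, hB1]
    · rw [Matrix.det_mul, hA2, hB2, mul_one]⟩
  one := ⟨1, by simp⟩
  inv A := ⟨A.1ᵀ, by
    obtain ⟨hA1, hA2⟩ := A.2
    constructor
    · rw [Matrix.transpose_transpose]; exact mul_eq_one_comm.mp hA1
    · rw [Matrix.det_transpose]; exact hA2⟩
  mul_assoc a b c := Subtype.ext (mul_assoc a.1 b.1 c.1)
  one_mul a := Subtype.ext (one_mul a.1)
  mul_one a := Subtype.ext (mul_one a.1)
  inv_mul_cancel a := Subtype.ext a.2.1

instance : TopologicalSpace SO3T := instTopologicalSpaceSubtype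

instance : MeasurableSpace SO3T := borel SO3T

instance : BorelSpace SO3T := ⟨rfl⟩

end SO3T

section Aux

variable {μ : Measure SO3T} [IsProbabilityMeasure μ]

lemma SO3T.entry_abs_le_one (A : SO3T) (i j : Fin 3) : |A.val i j| ≤ 1 := by
  have h := congrFun (congrFun A.2.1 j) j
  have h1 : ∑ k, A.val k j * A.val k j = 1 := by
    simpa [Matrix.mul_apply, Matrix.transpose_apply, Matrix.one_apply] using h
  have h2 : A.val i j * A.val i j ≤ 1 := by
    calc A.val i j * A.val i j ≤ ∑ k, A.val k j * A.val k j :=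
          Finset.single_le_sum (f := fun k => A.val k j * A.val k j)
            (fun k _ => mul_self_nonneg _) (Finset.mem_univ i)
      _ = 1 := h1
  exact abs_le_one_iff_mul_self_le_one.2 h2

lemma cont_tr (N : Mat3) : Continuous (fun A : SO3T => Matrix.trace (N * A.val)) :=
  (Continuous.matrix_mul continuous_const continuous_subtype_val).matrix_trace

lemma tr_bound (N : Mat3) (A : SO3T) :
    |Matrix.trace (N * A.val)| ≤ ∑ i, ∑ j, |N i j| := by
  have : Matrix.trace (N * A.val) = ∑ i, ∑ j, N i j * A.val j i := by
    simp [Matrix.trace, Matrix.diag, Matrix.mul_apply]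
  rw [this]
  calc |∑ i, ∑ j, N i j * A.val j i| ≤ ∑ i, |∑ j, N i j * A.val j i| :=
        Finset.abs_sum_le_sum_abs _ _
    _ ≤ ∑ i, ∑ j, |N i j * A.val j i| :=
        Finset.sum_le_sum fun i _ => Finset.abs_sum_le_sum_abs _ _
    _ ≤ ∑ i, ∑ j, |N i j| := by
        refine Finset.sum_le_sum fun i _ => Finset.sum_le_sum fun j _ => ?_
        rw [abs_mul]
        calc |N i j| * |A.val j i| ≤ |N i j| * 1 :=
          mul_le_mul_of_nonneg_left (SO3T.entry_abs_le_one A j i) (abs_nonneg _)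
        _ = |N i j| := mul_one _

lemma memℒp_tr (N : Mat3) (c : ℝ) :
    MemLp (fun A : SO3T => c * Matrix.trace (N * A.val)) 2 μ := by
  refine MemLp.of_bound ((continuous_const.mul (cont_tr N)).aestronglyMeasurable)
    (|c| * ∑ i, ∑ j, |N i j|) (ae_of_all _ fun A => ?_)
  rw [Real.norm_eq_abs, abs_mul]
  exact mul_le_mul_of_nonneg_left (tr_bound N A) (abs_nonneg _)

lemma memℒp_exp_tr (z t : ℝ) (N : Mat3) :
    MemLp (fun A : SO3T => z * Real.exp (t * Matrix.trace (N * A.val))) 2 μ := by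
  refine MemLp.of_bound
    ((continuous_const.mul ((continuous_const.mul (cont_tr N)).rexp)).aestronglyMeasurable)
    (|z| * Real.exp (|t| * ∑ i, ∑ j, |N i j|)) (ae_of_all _ fun A => ?_)
  rw [Real.norm_eq_abs, abs_mul, Real.abs_exp]
  refine mul_le_mul_of_nonneg_left (Real.exp_le_exp.2 ?_) (abs_nonneg _)
  calc t * Matrix.trace (N * A.val) ≤ |t * Matrix.trace (N * A.val)| := le_abs_self _
    _ = |t| * |Matrix.trace (N * A.val)| := abs_mul _ _
    _ ≤ |t| * ∑ i, ∑ j, |N i j| :=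
        mul_le_mul_of_nonneg_left (tr_bound N A) (abs_nonneg _)

lemma memℒp_integrable_mul {f g : SO3T → ℝ} (hf : MemLp f 2 μ) (hg : MemLp g 2 μ) :
    Integrable (fun A => f A * g A) μ := by
  have h := L2.integrable_inner (𝕜 := ℝ) (hf.toLp f) (hg.toLp g)
  refine h.congr ?_
  filter_upwards [hf.coeFn_toLp, hg.coeFn_toLp] with A h1 h2
  simp [RCLike.inner_apply, h1, h2, mul_comm]

lemma L2inner_eq (f g : Lp ℝ 2 μ) : (inner ℝ f g : ℝ) = ∫ a, f a * g a ∂μ := by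
  rw [L2.inner_def]
  congr 1
  funext a
  simp [RCLike.inner_apply, mul_comm]

end Aux

section Tmap

set_option linter.unusedSectionVars false

variable (μ : Measure SO3T) [IsProbabilityMeasure μ] (Λ0 : SO3T)

def gfun (P : Mat3) (A : SO3T) : ℝ := (1 / 2 : ℝ) * Matrix.trace (Pᵀ * (Λ0.val)ᵀ * A.val)

lemma gfun_memℒp (P : Mat3) : MemLp (gfun Λ0 P) 2 μ := by
  have : gfun Λ0 P = fun A : SO3T => (1 / 2 : ℝ) * Matrix.trace ((Pᵀ * (Λ0.val)ᵀ) * A.val) := by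
    funext A; simp [gfun, Matrix.mul_assoc]
  rw [this]; exact memℒp_tr _ _

def Tmap : Mat3 →ₗ[ℝ] Lp ℝ 2 μ where
  toFun P := (gfun_memℒp μ Λ0 P).toLp (gfun Λ0 P)
  map_add' P Q := by
    have hfg : gfun Λ0 (P + Q) = gfun Λ0 P + gfun Λ0 Q := by
      funext A
      simp only [gfun, Matrix.transpose_add, Matrix.add_mul, Matrix.trace_add, Pi.add_apply]
      ring
    simp only [hfg]
    exact MemLp.toLp_add _ _
  map_smul' c P := by
    have hfg : gfun Λ0 (c • P) = c • gfun Λ0 P := by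
      funext A
      simp only [gfun, Matrix.transpose_smul, Matrix.smul_mul, Matrix.trace_smul, Pi.smul_apply,
        smul_eq_mul]
      ring
    simp only [hfg, RingHom.id_apply]
    exact MemLp.toLp_const_smul _ _

def skewSub : Submodule ℝ Mat3 where
  carrier := {P | Pᵀ = -P}
  add_mem' := by
    intro a b ha hb
    simp only [Set.mem_setOf_eq] at *
    rw [Matrix.transpose_add, ha, hb, neg_add]
  zero_mem' := by simp
  smul_mem' := by
    intro c P hP
    simp only [Set.mem_setOf_eq] at *
    rw [Matrix.transpose_smul, hP, smul_neg]

def Vsub : Submodule ℝ (Lp ℝ 2 μ) := skewSub.map (Tmap μ Λ0)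

instance : FiniteDimensional ℝ (Vsub μ Λ0) := Module.Finite.map _ _

example : (Vsub μ Λ0)ᗮᗮ = Vsub μ Λ0 := Submodule.orthogonal_orthogonal _

end Tmap

section KeyLemma

set_option linter.unusedSectionVars false

variable (μ : Measure SO3T) [IsProbabilityMeasure μ]

lemma key (Mfun ψ f : SO3T → ℝ) (hM : MemLp Mfun 2 μ) (hψ : MemLp ψ 2 μ)
    (hf : MemLp f 2 μ) :
    ∫ A, ((∫ B, f B ∂μ) * Mfun A - f A) * ψ A ∂μ
      = ∫ A, f A * ((∫ B, ψ B * Mfun B ∂μ) - ψ A) ∂μ := by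
  have intMψ : Integrable (fun A => Mfun A * ψ A) μ := memℒp_integrable_mul hM hψ
  have intfψ : Integrable (fun A => f A * ψ A) μ := memℒp_integrable_mul hf hψ
  have intf : Integrable f μ := hf.integrable one_le_two
  have e1 : (fun A => ((∫ B, f B ∂μ) * Mfun A - f A) * ψ A)
      = fun A => (∫ B, f B ∂μ) * (Mfun A * ψ A) - f A * ψ A := by
    funext A; ring
  have e2 : (fun A => f A * ((∫ B, ψ B * Mfun B ∂μ) - ψ A))
      = fun A => f A * (∫ B, ψ B * Mfun B ∂μ) - f A * ψ A := by
    funext A; ring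
  rw [e1, e2, integral_sub (intMψ.const_mul _) intfψ,
    integral_sub (intf.mul_const _) intfψ, integral_const_mul, integral_mul_const]
  have e3 : ∫ A, Mfun A * ψ A ∂μ = ∫ B, ψ B * Mfun B ∂μ :=
    integral_congr_ae (ae_of_all _ fun A => mul_comm _ _)
  rw [e3]

end KeyLemma

/-- Characterization of the Generalized Collision Invariants of the jump collision operator
`Γ_{Λ₀}(f) = (∫ f dμ) M_{Λ₀} - f`: a function `ψ ∈ L²(μ)` is a GCI associated with
`Λ₀ ∈ SO₃(ℝ)` (i.e. `∫ Γ_{Λ₀}(f) ψ dμ = 0` for all `f ∈ L²(μ)` whose flux `∫ A f dμ` is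
orthogonal to the tangent space at `Λ₀`) if and only if there is an antisymmetric matrix `P`
such that `(∫ ψ M_{Λ₀} dμ) - ψ(A) = ½ Tr(Pᵀ Λ₀ᵀ A)` for `μ`-a.e. `A`.  Here `μ` is the Haar
probability measure of `SO₃(ℝ)` (characterized by left invariance) and
`M_Λ(A) = Z⁻¹ exp(Tr(Λᵀ A)/(2D))`. -/
theorem GCI_characterization_jump_model (D : ℝ) (hD : 0 < D)
    (μ : Measure SO3T) [IsProbabilityMeasure μ]
    (hinv : ∀ g : SO3T, μ.map (fun A => g * A) = μ)
    (Z : ℝ) (hZ : Z = ∫ A : SO3T, Real.exp (1 / (2 * D) * Matrix.trace A.val) ∂μ)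
    (Λ0 : SO3T) (ψ : SO3T → ℝ) (hψ : MemLp ψ 2 μ) :
    (∀ f : SO3T → ℝ, MemLp f 2 μ →
        (∀ P : Mat3, Pᵀ = -P →
          ∫ A, f A * ((1 / 2 : ℝ) * Matrix.trace (Pᵀ * (Λ0.val)ᵀ * A.val)) ∂μ = 0) →
        ∫ A, ((∫ B, f B ∂μ) *
            (Z⁻¹ * Real.exp (1 / (2 * D) * Matrix.trace ((Λ0.val)ᵀ * A.val))) - f A) * ψ A ∂μ
          = 0)
      ↔ ∃ P : Mat3, Pᵀ = -P ∧
          ∀ᵐ A ∂μ,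
            (∫ B, ψ B *
                (Z⁻¹ * Real.exp (1 / (2 * D) * Matrix.trace ((Λ0.val)ᵀ * B.val))) ∂μ) - ψ A
              = (1 / 2 : ℝ) * Matrix.trace (Pᵀ * (Λ0.val)ᵀ * A.val) := by
  have hM2 : MemLp (fun A : SO3T =>
      Z⁻¹ * Real.exp (1 / (2 * D) * Matrix.trace ((Λ0.val)ᵀ * A.val))) 2 μ :=
    memℒp_exp_tr _ _ _
  set c : ℝ := ∫ B, ψ B *
      (Z⁻¹ * Real.exp (1 / (2 * D) * Matrix.trace ((Λ0.val)ᵀ * B.val))) ∂μ with hc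
  constructor
  · intro h
    set φ : SO3T → ℝ := fun A => c - ψ A with hφdef
    have hφ : MemLp φ 2 μ := (memLp_const c).sub hψ
    set φL : Lp ℝ 2 μ := hφ.toLp φ with hφL
    have hmem : φL ∈ (Vsub μ Λ0)ᗮᗮ := by
      rw [Submodule.mem_orthogonal]
      intro u hu
      have hcons : ∀ P : Mat3, Pᵀ = -P →
          ∫ A, u A * ((1 / 2 : ℝ) * Matrix.trace (Pᵀ * (Λ0.val)ᵀ * A.val)) ∂μ = 0 := by
        intro P hP
        have hTP : Tmap μ Λ0 P ∈ Vsub μ Λ0 :=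
          Submodule.mem_map_of_mem (show P ∈ skewSub from hP)
        have h0 : (inner ℝ (Tmap μ Λ0 P) u : ℝ) = 0 :=
          (Submodule.mem_orthogonal _ u).1 hu _ hTP
        rw [L2inner_eq] at h0
        rw [← h0]
        refine integral_congr_ae ?_
        filter_upwards [(gfun_memℒp μ Λ0 P).coeFn_toLp] with A hA
        rw [show (Tmap μ Λ0 P) A = gfun Λ0 P A from hA, mul_comm]
        rfl
      have h1 := h (⇑u) (Lp.memLp u) hcons
      have h2 : ∫ A, u A * (c - ψ A) ∂μ = 0 :=
        (key μ _ ψ (⇑u) hM2 hψ (Lp.memLp u)).symm.trans h1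
      rw [L2inner_eq]
      rw [← h2]
      refine integral_congr_ae ?_
      filter_upwards [hφ.coeFn_toLp] with A hA
      rw [show φL A = φ A from hA]
    rw [Submodule.orthogonal_orthogonal] at hmem
    obtain ⟨P, hP, hTP⟩ := hmem
    refine ⟨P, hP, ?_⟩
    filter_upwards [(gfun_memℒp μ Λ0 P).coeFn_toLp, hφ.coeFn_toLp] with A hA1 hA2
    have hTP2 : MemLp.toLp (gfun Λ0 P) (gfun_memℒp μ Λ0 P) = φL := hTP
    have : gfun Λ0 P A = φ A := by
      rw [← hA1, hTP2, hA2]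
    exact this.symm
  · rintro ⟨P, hP, hae⟩ f hf hcons
    refine (key μ _ ψ f hM2 hψ hf).trans ?_
    have : ∫ A, f A * (c - ψ A) ∂μ
        = ∫ A, f A * ((1 / 2 : ℝ) * Matrix.trace (Pᵀ * (Λ0.val)ᵀ * A.val)) ∂μ := by
      refine integral_congr_ae ?_
      filter_upwards [hae] with A hA
      rw [hA]
    exact this.trans (hcons P hP)
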